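/- Let E be a finite-dimensional real inner product space and θ₀ ∈ E. Let L : E → ℝ be differentiable on a neighborhood of θ₀ with gradient map ∇L differentiable at θ₀; denote by H the derivative of ∇L at θ₀ (the Hessian of L at θ₀) and assume H, viewed as a continuous linear map on E, is invertible. Let ℓ : E → ℝ be differentiable on a neighborhood of θ₀. Suppose θ : ℝ → E is differentiable at 0 with θ(0) = θ₀, the map ε ↦ ∇ℓ(θ(ε)) is continuous at 0, and the stationarity condition ∇L(θ(ε)) + ε · ∇ℓ(θ(ε)) = 0 holds for all ε in a neighborhood of 0. Then θ′(0) = −H⁻¹(∇ℓ(θ₀)). -/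

import Mathlib

open RealInnerProductSpace

/-- Influence-function derivative of the upweighted optimum.
`L` is differentiable near `θ₀`, its gradient map is differentiable at `θ₀`
with invertible Hessian `H` (as a continuous linear map), `ℓ` is differentiable
near `θ₀`, `θ : ℝ → E` is differentiable at `0` with `θ 0 = θ₀`,
`ε ↦ ∇ℓ(θ ε)` is continuous at `0`, and the stationarity condition
`∇L(θ ε) + ε • ∇ℓ(θ ε) = 0` holds for `ε` near `0`. Then
`θ′(0) = −H⁻¹(∇ℓ(θ₀))`. -/
theorem stmt_6 {E : Type*} [NormedAddCommGroup E] [InnerProductSpace ℝ E]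
    [FiniteDimensional ℝ E] (θ₀ : E) (L ℓ : E → ℝ)
    (hL : ∀ᶠ x in nhds θ₀, DifferentiableAt ℝ L x)
    (hL' : DifferentiableAt ℝ (gradient L) θ₀)
    (H : E ≃L[ℝ] E) (hH : (H : E →L[ℝ] E) = fderiv ℝ (gradient L) θ₀)
    (hℓ : ∀ᶠ x in nhds θ₀, DifferentiableAt ℝ ℓ x)
    (θ : ℝ → E) (hθ : DifferentiableAt ℝ θ 0) (hθ0 : θ 0 = θ₀)
    (hcont : ContinuousAt (fun ε : ℝ => gradient ℓ (θ ε)) 0)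
    (hstat : ∀ᶠ ε in nhds (0 : ℝ), gradient L (θ ε) + ε • gradient ℓ (θ ε) = 0) :
    deriv θ 0 = -(H.symm (gradient ℓ θ₀)) := by
  -- derivative of ε ↦ ∇L(θ ε) at 0 via chain rule
  have hg : HasDerivAt (fun ε => gradient L (θ ε)) (H (deriv θ 0)) 0 := by
    have hF : HasFDerivAt (gradient L) (fderiv ℝ (gradient L) θ₀) (θ 0) := by
      rw [hθ0]; exact hL'.hasFDerivAt
    have := hF.comp_hasDerivAt 0 hθ.hasDerivAt
    rw [← hH] at this
    exact this
  -- derivative of ε ↦ -(ε • ∇ℓ(θ ε)) at 0 via slope and continuity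
  have hg2 : HasDerivAt (fun ε : ℝ => -(ε • gradient ℓ (θ ε)))
      (-(gradient ℓ θ₀)) 0 := by
    rw [hasDerivAt_iff_tendsto_slope]
    have heq : ∀ ε : ℝ, ε ≠ 0 →
        slope (fun ε : ℝ => -(ε • gradient ℓ (θ ε))) 0 ε = -(gradient ℓ (θ ε)) := by
      intro ε hε
      simp [slope, smul_smul, inv_mul_cancel₀ hε]
    have htend : Filter.Tendsto (fun ε : ℝ => -(gradient ℓ (θ ε)))
        (nhdsWithin 0 {(0:ℝ)}ᶜ) (nhds (-(gradient ℓ θ₀))) := by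
      have : Filter.Tendsto (fun ε : ℝ => -(gradient ℓ (θ ε))) (nhds 0)
          (nhds (-(gradient ℓ (θ 0)))) := hcont.tendsto.neg
      rw [hθ0] at this
      exact this.mono_left nhdsWithin_le_nhds
    exact htend.congr' (by
      filter_upwards [self_mem_nhdsWithin] with ε hε
      exact (heq ε hε).symm)
  -- the two functions agree near 0
  have heq : (fun ε => gradient L (θ ε)) =ᶠ[nhds (0:ℝ)]
      (fun ε : ℝ => -(ε • gradient ℓ (θ ε))) := by
    filter_upwards [hstat] with ε hε
    exact eq_neg_of_add_eq_zero_left hε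
  have hg' := hg2.congr_of_eventuallyEq heq
  have huniq : H (deriv θ 0) = -(gradient ℓ θ₀) := hg.unique hg'
  have := congrArg H.symm huniq
  simpa using this
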